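/- The degree 0 part of A^{n−k,k} is isomorphic, as a ring, to the product of copies of ℤ indexed by B^{n−k,k}: (A^{n−k,k})⁰ ≅ ∏_{a∈B^{n−k,k}} ℤ·1_a. -/

import Mathlib

noncomputable section
attribute [local instance 0] Classical.propDecidable

/-- A crossingless (perfect, noncrossing) matching of the `2 * n` points `0, 1, …, 2n-1`. -/
structure Matching (n : ℕ) where
  f : Fin (2 * n) → Fin (2 * n)
  invol : Function.Involutive f
  noFix : ∀ i, f i ≠ i
  noncross : ∀ i j : Fin (2 * n), (i : ℕ) < (j : ℕ) → (j : ℕ) < (f i : ℕ) →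
      (i : ℕ) < (f j : ℕ) ∧ (f j : ℕ) < (f i : ℕ)

instance (n : ℕ) : Finite (Matching n) :=
  Finite.of_injective (fun a => a.f) (by
    rintro ⟨f, _, _, _⟩ ⟨g, _, _, _⟩ h
    simp only at h
    subst h
    rfl)

/-- `i` lies on the left platform (the first `n - k` points). -/
def onLeft (n k : ℕ) (i : Fin (2 * n)) : Prop := (i : ℕ) < n - k

/-- `i` lies on the right platform (the last `k` points). -/
def onRight (n k : ℕ) (i : Fin (2 * n)) : Prop := 2 * n - k ≤ (i : ℕ)

/-- Membership in `B^{n-k,k}`: a crossingless matching with no arc joining two points of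
the left platform and no arc joining two points of the right platform. -/
def Matching.inB (n k : ℕ) (a : Matching n) : Prop :=
  (∀ i, onLeft n k i → ¬ onLeft n k (a.f i)) ∧
  (∀ i, onRight n k i → ¬ onRight n k (a.f i))

/-- The set `B^{n-k,k}` of crossingless matchings with platforms of sizes `n-k` and `k`. -/
def BB (n k : ℕ) : Type := {a : Matching n // a.inB n k}

instance (n k : ℕ) : Finite (BB n k) := Subtype.finite
instance (n k : ℕ) : Fintype (BB n k) := Fintype.ofFinite _

/-- The setoid on points whose classes are the circles of the closed 1-manifold `W(a)b`. -/
def circleSetoid (n : ℕ) (a b : Matching n) : Setoid (Fin (2 * n)) :=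
  Relation.EqvGen.setoid (fun i j => a.f i = j ∨ b.f i = j)

/-- The set of circles of `W(a)b`. -/
def Circles (n : ℕ) (a b : Matching n) : Type := Quotient (circleSetoid n a b)

instance (n : ℕ) (a b : Matching n) : Finite (Circles n a b) := Quotient.finite _
instance (n : ℕ) (a b : Matching n) : Fintype (Circles n a b) := Fintype.ofFinite _

/-- The circle through the point `i`. -/
def cmk (n : ℕ) (a b : Matching n) (i : Fin (2 * n)) : Circles n a b :=
  Quotient.mk (circleSetoid n a b) i

/-- A labelling of the circles of `W(a)b` by basis elements of `𝒜`; `false` stands for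
`𝟏` and `true` stands for `X`. -/
def Lab (n : ℕ) (a b : Matching n) : Type := Circles n a b → Bool

/-- `F(W(a)b){n}` : the free abelian group on the set of labellings of the circles of
`W(a)b`; the simple tensor `y₁ ⊗ ⋯ ⊗ y_r` (each `y_i ∈ {𝟏, X}`) corresponds to the
labelling sending each circle to its label. -/
abbrev FM (n : ℕ) (a b : Matching n) : Type := Lab n a b →₀ ℤ

/-- Degree of a basis labelling, including the grading shift `{n}`:
`𝟏` has degree `-1` and `X` has degree `1`. -/
def degLab (n : ℕ) (a b : Matching n) (g : Lab n a b) : ℤ :=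
  (n : ℤ) + ∑ c : Circles n a b, (if g c then (1 : ℤ) else -1)

/-- The homogeneous degree-`d` component of `F(W(a)b){n}`. -/
def FMdeg (n : ℕ) (a b : Matching n) (d : ℤ) : AddSubgroup (FM n a b) where
  carrier := {x | ∀ g ∈ x.support, degLab n a b g = d}
  zero_mem' := by simp
  add_mem' := by
    intro x y hx hy g hg
    rcases Finset.mem_union.mp (Finsupp.support_add hg) with h | h
    · exact hx g h
    · exact hy g h
  neg_mem' := by
    intro x hx g hg
    rw [Finsupp.support_neg] at hg
    exact hx g hg

/-- A circle of `W(a)b` touches the left platform. -/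
def touchesLeft (n k : ℕ) (a b : Matching n) (c : Circles n a b) : Prop :=
  ∃ i, onLeft n k i ∧ cmk n a b i = c

/-- A circle of `W(a)b` touches the right platform. -/
def touchesRight (n k : ℕ) (a b : Matching n) (c : Circles n a b) : Prop :=
  ∃ i, onRight n k i ∧ cmk n a b i = c

/-- Type I circles: disjoint from both platforms. -/
def typeI (n k : ℕ) (a b : Matching n) (c : Circles n a b) : Prop :=
  ¬ touchesLeft n k a b c ∧ ¬ touchesRight n k a b c

/-- Type III circles: meeting one of the platforms at least twice. -/
def typeIII (n k : ℕ) (a b : Matching n) (c : Circles n a b) : Prop :=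
  (∃ i j, i ≠ j ∧ onLeft n k i ∧ onLeft n k j ∧ cmk n a b i = c ∧ cmk n a b j = c) ∨
  (∃ i j, i ≠ j ∧ onRight n k i ∧ onRight n k j ∧ cmk n a b i = c ∧ cmk n a b j = c)

/-- Type II circles: meeting at least one platform, and each platform at most once. -/
def typeII (n k : ℕ) (a b : Matching n) (c : Circles n a b) : Prop :=
  (touchesLeft n k a b c ∨ touchesRight n k a b c) ∧ ¬ typeIII n k a b c

/-- `W(a)b` contains a type III circle. -/
def hasTypeIII (n k : ℕ) (a b : Matching n) : Prop := ∃ c, typeIII n k a b c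

/-- The component `_a(I^{n-k,k})_b` of the ideal `I^{n-k,k}`: all of `F(W(a)b)` if some
circle is of type III, and otherwise the span of the simple tensors carrying the label `X`
on at least one type II circle. -/
def Icomp (n k : ℕ) (a b : Matching n) : AddSubgroup (FM n a b) :=
  if hasTypeIII n k a b then ⊤
  else AddSubgroup.closure
    {x | ∃ (g : Lab n a b) (c : Circles n a b), typeII n k a b c ∧ g c = true ∧
      x = Finsupp.single g 1}

/-- The component `_a(A^{n-k,k})_b = F(W(a)b){n} / _a(I^{n-k,k})_b` of the quotient ring
`A^{n-k,k} = Ã^{n-k,k}/I^{n-k,k}`. -/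
abbrev Acomp (n k : ℕ) (a b : Matching n) : Type := FM n a b ⧸ Icomp n k a b

/-- The labelling with every circle labelled `𝟏`. -/
def labOne (n : ℕ) (a b : Matching n) : Lab n a b := fun _ => false

/-- `1_a = 𝟏^{⊗n} ∈ F(W(a)a){n}`. -/
def oneBasis (n : ℕ) (a : Matching n) : FM n a a := Finsupp.single (labOne n a a) 1

/-- The multiplication of the arc ring `H^n`: the collection of maps
`F(W(a)b){n} ⊗ F(W(b)c){n} → F(W(a)c){n}` induced by the minimal (saddle) cobordisms
`W(a)bW(b)c → W(a)c`, applying the TQFT `F`.  It is biadditive, associative, unital with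
units `1_a`, and degree-preserving. -/
structure HMulData (n : ℕ) where
  mul : ∀ a b c : Matching n, FM n a b → FM n b c → FM n a c
  add_left : ∀ a b c x x' y, mul a b c (x + x') y = mul a b c x y + mul a b c x' y
  add_right : ∀ a b c x y y', mul a b c x (y + y') = mul a b c x y + mul a b c x y'
  assoc : ∀ a b c d x y z, mul a c d (mul a b c x y) z = mul a b d x (mul b c d y z)
  one_mul : ∀ a b x, mul a a b (oneBasis n a) x = x
  mul_one : ∀ a b x, mul a b b x (oneBasis n b) = x
  graded : ∀ a b c (p q : ℤ) x y, x ∈ FMdeg n a b p → y ∈ FMdeg n b c q →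
      mul a b c x y ∈ FMdeg n a c (p + q)


/-- The degree-`d` homogeneous component of `_a(A^{n-k,k})_b`. -/
def AcompDeg (n k : ℕ) (a b : Matching n) (d : ℤ) : AddSubgroup (Acomp n k a b) :=
  (FMdeg n a b d).map (QuotientAddGroup.mk' (Icomp n k a b))

/-- The graded ring `A^{n-k,k} = Ã^{n-k,k}/I^{n-k,k}`, presented abstractly: a ring `R`
together with an additive decomposition into the components `_a(A^{n-k,k})_b`
(`a, b ∈ B^{n-k,k}`), such that multiplication is induced by the minimal-cobordism
multiplication of the arc ring `H^n`: components compose as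
`_a(A)_b ⊗ _b(A)_c → _a(A)_c`, products of components with mismatching inner indices
vanish, the identity is `1 = ∑_a 1_a`, and multiplication respects the grading. -/
structure ArcAlg (n k : ℕ) where
  R : Type
  [ringR : Ring R]
  dec : R ≃+ ((p : BB n k × BB n k) → Acomp n k p.1.1 p.2.1)
  mul_apart : ∀ (a b c d : BB n k) (x : Acomp n k a.1 b.1) (y : Acomp n k c.1 d.1),
      b ≠ c → dec.symm (Pi.single (a, b) x) * dec.symm (Pi.single (c, d) y) = 0
  mul_comp : ∀ (a b c : BB n k) (x : Acomp n k a.1 b.1) (y : Acomp n k b.1 c.1),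
      ∃ z : Acomp n k a.1 c.1,
        dec.symm (Pi.single (a, b) x) * dec.symm (Pi.single (b, c) y) =
          dec.symm (Pi.single (a, c) z)
  one_def : (1 : R) = ∑ a : BB n k,
      dec.symm (Pi.single (a, a)
        (QuotientAddGroup.mk' (Icomp n k a.1 a.1) (oneBasis n a.1)))
  graded_mul : ∀ (a b c : BB n k) (d₁ d₂ : ℤ)
      (x : Acomp n k a.1 b.1) (y : Acomp n k b.1 c.1),
      x ∈ AcompDeg n k a.1 b.1 d₁ → y ∈ AcompDeg n k b.1 c.1 d₂ →
      ∃ z ∈ AcompDeg n k a.1 c.1 (d₁ + d₂),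
        dec.symm (Pi.single (a, b) x) * dec.symm (Pi.single (b, c) y) =
          dec.symm (Pi.single (a, c) z)

attribute [instance] ArcAlg.ringR

/-- The image in `A^{n-k,k}` of a component element. -/
def ArcAlg.incl {n k : ℕ} (A : ArcAlg n k) (a b : BB n k) (x : Acomp n k a.1 b.1) : A.R :=
  A.dec.symm (Pi.single (a, b) x)

/-- The idempotent `1_a ∈ A^{n-k,k}`. -/
def ArcAlg.idem {n k : ℕ} (A : ArcAlg n k) (a : BB n k) : A.R :=
  A.incl a a (QuotientAddGroup.mk' (Icomp n k a.1 a.1) (oneBasis n a.1))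

/-- The degree-`d` homogeneous part of the graded ring `A^{n-k,k}`. -/
def ArcAlg.degPart {n k : ℕ} (A : ArcAlg n k) (d : ℤ) : AddSubgroup A.R :=
  AddSubgroup.comap A.dec.toAddMonoidHom
    (AddSubgroup.pi Set.univ (fun p => AcompDeg n k p.1.1 p.2.1 d))

section AuxComb

open Finset

variable {n k : ℕ}

lemma cmk_eq_iff (a b : Matching n) (i j : Fin (2*n)) :
    cmk n a b i = cmk n a b j ↔ Relation.EqvGen (fun i j => a.f i = j ∨ b.f i = j) i j := by
  constructor
  · exact fun h => Quotient.exact h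
  · exact fun h => Quotient.sound h

lemma circle_rel_self (a : Matching n) (i j : Fin (2*n)) :
    cmk n a a i = cmk n a a j ↔ (i = j ∨ a.f i = j) := by
  rw [cmk_eq_iff]
  constructor
  · intro h
    induction h with
    | rel x y hxy => rcases hxy with h | h <;> exact Or.inr h
    | refl x => exact Or.inl rfl
    | symm x y _ ih =>
        rcases ih with h | h
        · exact Or.inl h.symm
        · exact Or.inr (by rw [← h, a.invol x])
    | trans x y z _ _ ih1 ih2 =>
        rcases ih1 with h | h <;> rcases ih2 with h' | h'
        · exact Or.inl (h.trans h')
        · exact Or.inr (by rw [h]; exact h')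
        · exact Or.inr (h.trans h')
        · refine Or.inl ?_
          have hx := a.invol x
          rw [h, h'] at hx
          exact hx.symm
  · rintro (rfl | h)
    · exact Relation.EqvGen.refl i
    · exact Relation.EqvGen.rel _ _ (Or.inl h)

lemma cmk_af (a b : Matching n) (i : Fin (2*n)) :
    cmk n a b (a.f i) = cmk n a b i := by
  rw [cmk_eq_iff]
  exact Relation.EqvGen.symm _ _ (Relation.EqvGen.rel _ _ (Or.inl rfl))

lemma cmk_bf (a b : Matching n) (i : Fin (2*n)) :
    cmk n a b (b.f i) = cmk n a b i := by
  rw [cmk_eq_iff]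
  exact Relation.EqvGen.symm _ _ (Relation.EqvGen.rel _ _ (Or.inr rfl))

lemma card_fin_eq_sum_fibers (a b : Matching n) :
    2 * n = ∑ c : Circles n a b, (univ.filter (fun i => cmk n a b i = c)).card := by
  have h := Finset.card_eq_sum_card_fiberwise
    (f := cmk n a b) (s := (univ : Finset (Fin (2*n)))) (t := univ) (fun x _ => mem_univ _)
  simpa using h

lemma fiber_self (a : Matching n) (i : Fin (2*n)) :
    (univ.filter (fun j => cmk n a a j = cmk n a a i)) = {i, a.f i} := by
  ext j
  simp only [mem_filter, mem_univ, true_and, mem_insert, mem_singleton,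
    circle_rel_self]
  constructor
  · rintro (h | h)
    · exact Or.inl h
    · exact Or.inr (by rw [← h, a.invol j])
  · rintro (rfl | rfl)
    · exact Or.inl rfl
    · exact Or.inr (a.invol i)

lemma card_pair_self (a : Matching n) (i : Fin (2*n)) :
    ({i, a.f i} : Finset (Fin (2*n))).card = 2 := by
  rw [card_insert_of_notMem (by simp only [mem_singleton]; exact fun h => a.noFix i h.symm),
    card_singleton]

lemma card_circles_self (a : Matching n) : Fintype.card (Circles n a a) = n := by
  have h := card_fin_eq_sum_fibers a a
  have h2 : ∀ c : Circles n a a, (univ.filter (fun i => cmk n a a i = c)).card = 2 := by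
    intro c
    induction c using Quotient.inductionOn with
    | h i => rw [show Quotient.mk _ i = cmk n a a i from rfl, fiber_self, card_pair_self]
  rw [Finset.sum_congr rfl (fun c _ => h2 c), Finset.sum_const, smul_eq_mul, mul_comm] at h
  simp only [Finset.card_univ] at h
  omega

lemma two_le_fiber (a b : Matching n) (c : Circles n a b) :
    2 ≤ (univ.filter (fun i => cmk n a b i = c)).card := by
  induction c using Quotient.inductionOn with
  | h i =>
    have hsub : ({i, a.f i} : Finset (Fin (2*n))) ⊆
        univ.filter (fun j => cmk n a b j = Quotient.mk _ i) := by
      intro j hj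
      simp only [mem_insert, mem_singleton] at hj
      simp only [mem_filter, mem_univ, true_and]
      rcases hj with rfl | rfl
      · rfl
      · exact cmk_af a b i
    calc 2 = ({i, a.f i} : Finset (Fin (2*n))).card := (card_pair_self a i).symm
      _ ≤ _ := Finset.card_le_card hsub

lemma card_circles_le (a b : Matching n) : Fintype.card (Circles n a b) ≤ n := by
  have hsum := card_fin_eq_sum_fibers a b
  have hge : 2 * Fintype.card (Circles n a b) ≤
      ∑ c : Circles n a b, (univ.filter (fun i => cmk n a b i = c)).card := by
    calc 2 * Fintype.card (Circles n a b)
        = ∑ _c : Circles n a b, 2 := by rw [Finset.sum_const, smul_eq_mul, Finset.card_univ, mul_comm]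
      _ ≤ _ := Finset.sum_le_sum (fun c _ => two_le_fiber a b c)
  omega

lemma card_circles_lt (a b : Matching n) (hab : a.f ≠ b.f) :
    Fintype.card (Circles n a b) < n := by
  obtain ⟨i₀, hi₀⟩ : ∃ i, a.f i ≠ b.f i := by
    by_contra h
    push_neg at h
    exact hab (funext h)
  set c₀ := cmk n a b i₀ with hc₀
  have h3 : 3 ≤ (univ.filter (fun i => cmk n a b i = c₀)).card := by
    have hsub : ({i₀, a.f i₀, b.f i₀} : Finset (Fin (2*n))) ⊆
        univ.filter (fun j => cmk n a b j = c₀) := by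
      intro j hj
      simp only [mem_insert, mem_singleton] at hj
      simp only [mem_filter, mem_univ, true_and]
      rcases hj with rfl | rfl | rfl
      · rfl
      · exact cmk_af a b i₀
      · exact cmk_bf a b i₀
    have hcard : ({i₀, a.f i₀, b.f i₀} : Finset (Fin (2*n))).card = 3 := by
      rw [card_insert_of_notMem, card_insert_of_notMem, card_singleton]
      · simp only [mem_singleton]; exact hi₀
      · simp only [mem_insert, mem_singleton]
        push_neg
        exact ⟨fun h => (a.noFix i₀) h.symm, fun h => (b.noFix i₀) h.symm⟩
    calc 3 = _ := hcard.symm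
      _ ≤ _ := Finset.card_le_card hsub
  have hsum := card_fin_eq_sum_fibers a b
  have hge : ∑ c : Circles n a b, ((if c = c₀ then 3 else 2) : ℕ) ≤
      ∑ c : Circles n a b, (univ.filter (fun i => cmk n a b i = c)).card := by
    apply Finset.sum_le_sum
    intro c _
    by_cases h : c = c₀
    · rw [if_pos h, h]; exact h3
    · rw [if_neg h]; exact two_le_fiber a b c
  have hsplit : ∑ c : Circles n a b, ((if c = c₀ then 3 else 2) : ℕ) =
      2 * Fintype.card (Circles n a b) + 1 := by
    have he : ∀ c : Circles n a b, ((if c = c₀ then 3 else 2):ℕ) = (if c = c₀ then 1 else 0) + 2 := by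
      intro c; split <;> rfl
    rw [Finset.sum_congr rfl (fun c _ => he c), Finset.sum_add_distrib,
      Finset.sum_ite_eq' univ c₀ (fun _ => 1), Finset.sum_const, smul_eq_mul]
    simp only [Finset.mem_univ, if_true, Finset.card_univ]
    omega
  have hfin : 2 * Fintype.card (Circles n a b) + 1 ≤ 2 * n := by
    rw [← hsplit, hsum]
    exact hge
  omega

end AuxComb

section AuxDeg

open Finset

variable {n k : ℕ}

lemma Matching.f_injective : Function.Injective (Matching.f (n := n)) := by
  rintro ⟨f, _, _, _⟩ ⟨g, _, _, _⟩ h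
  simp only at h
  subst h
  rfl

lemma degLab_eq (a b : Matching n) (g : Lab n a b) :
    degLab n a b g = (n : ℤ) + 2 * ((univ.filter (fun c => g c = true)).card : ℤ)
      - (Fintype.card (Circles n a b) : ℤ) := by
  unfold degLab
  have he : ∀ c : Circles n a b,
      (if g c then (1:ℤ) else -1) = (if g c = true then (2:ℤ) else 0) - 1 := by
    intro c; by_cases h : g c <;> simp [h]
  rw [Finset.sum_congr rfl (fun c _ => he c), Finset.sum_sub_distrib]
  erw [← Finset.sum_filter]
  rw [Finset.sum_const, Finset.sum_const, Finset.card_univ]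
  rw [Finset.filter_congr_decidable]
  ring

lemma degLab_self (a : Matching n) (g : Lab n a a) :
    degLab n a a g = 2 * ((univ.filter (fun c => g c = true)).card : ℤ) := by
  rw [degLab_eq, card_circles_self]; ring

lemma degLab_labOne_self (a : Matching n) : degLab n a a (labOne n a a) = 0 := by
  rw [degLab_self]
  simp [labOne]

lemma eq_labOne_of_degLab_zero (a : Matching n) (g : Lab n a a)
    (h : degLab n a a g = 0) : g = labOne n a a := by
  rw [degLab_self] at h
  have h0 : (univ.filter (fun c => g c = true)).card = 0 := by omega
  rw [Finset.card_eq_zero, Finset.filter_eq_empty_iff] at h0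
  funext c
  have := h0 (mem_univ c)
  simp only [labOne]
  simpa using this

lemma degLab_ne_zero (a b : Matching n) (hab : a.f ≠ b.f) (g : Lab n a b) :
    degLab n a b g ≠ 0 := by
  rw [degLab_eq]
  have h1 := card_circles_lt a b hab
  have h2 : (0:ℤ) ≤ ((univ.filter (fun c => g c = true)).card : ℤ) := Int.natCast_nonneg _
  omega

lemma mem_FMdeg (a b : Matching n) (d : ℤ) (x : FM n a b) :
    x ∈ FMdeg n a b d ↔ ∀ g ∈ x.support, degLab n a b g = d := Iff.rfl

lemma FMdeg_zero_eq_zero (a b : Matching n) (hab : a.f ≠ b.f) (x : FM n a b)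
    (hx : x ∈ FMdeg n a b 0) : x = 0 := by
  have h : x.support = ∅ := by
    rw [Finset.eq_empty_iff_forall_notMem]
    intro g hg
    exact degLab_ne_zero a b hab g (hx g hg)
  exact Finsupp.support_eq_empty.mp h

lemma FMdeg_self_zero (a : Matching n) (x : FM n a a) (hx : x ∈ FMdeg n a a 0) :
    x = (x (labOne n a a)) • oneBasis n a := by
  have hs : x.support ⊆ {labOne n a a} := by
    intro g hg
    rw [Finset.mem_singleton]
    exact eq_labOne_of_degLab_zero a g (hx g hg)
  have h1 := Finsupp.support_subset_singleton.mp hs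
  rw [h1]
  unfold oneBasis
  rw [Finsupp.smul_single]
  norm_num

lemma oneBasis_mem (a : Matching n) : oneBasis n a ∈ FMdeg n a a 0 := by
  intro g hg
  have hg' : g = labOne n a a := by
    have := Finsupp.support_single_subset hg
    simpa using this
  rw [hg']
  exact degLab_labOne_self a

lemma smul_oneBasis_mem (a : Matching n) (m : ℤ) : m • oneBasis n a ∈ FMdeg n a a 0 :=
  AddSubgroup.zsmul_mem _ (oneBasis_mem a) m

lemma not_hasTypeIII_self (a : Matching n) (ha : a.inB n k) : ¬ hasTypeIII n k a a := by
  rintro ⟨c, hc⟩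
  rcases hc with ⟨i, j, hij, hi, hj, hci, hcj⟩ | ⟨i, j, hij, hi, hj, hci, hcj⟩
  · have hcc : cmk n a a i = cmk n a a j := by rw [hci, hcj]
    rcases (circle_rel_self a i j).mp hcc with h | h
    · exact hij h
    · exact ha.1 i hi (h ▸ hj)
  · have hcc : cmk n a a i = cmk n a a j := by rw [hci, hcj]
    rcases (circle_rel_self a i j).mp hcc with h | h
    · exact hij h
    · exact ha.2 i hi (h ▸ hj)

lemma eq_zero_of_smul_oneBasis_mem_Icomp (a : Matching n) (ha : a.inB n k) (m : ℤ)
    (h : m • oneBasis n a ∈ Icomp n k a a) : m = 0 := by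
  rw [Icomp, if_neg (not_hasTypeIII_self a ha)] at h
  set ev : FM n a a →+ ℤ := Finsupp.applyAddHom (labOne n a a) with hev
  have hle : AddSubgroup.closure
      {x | ∃ (g : Lab n a a) (c : Circles n a a), typeII n k a a c ∧ g c = true ∧
        x = Finsupp.single g 1} ≤ ev.ker := by
    rw [AddSubgroup.closure_le]
    rintro x ⟨g, c, _, hgc, rfl⟩
    have hne : g ≠ labOne n a a := by
      intro h'
      rw [h'] at hgc
      simp [labOne] at hgc
    simp only [SetLike.mem_coe, AddMonoidHom.mem_ker, hev, Finsupp.applyAddHom_apply]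
    exact Finsupp.single_eq_of_ne' hne
  have hm := hle h
  rw [AddMonoidHom.mem_ker, hev] at hm
  simp only [Finsupp.applyAddHom_apply, oneBasis, Finsupp.smul_apply,
    Finsupp.single_eq_same, smul_eq_mul, mul_one] at hm
  exact hm

lemma mk_smul_oneBasis_inj (a : Matching n) (ha : a.inB n k) {m m' : ℤ}
    (h : QuotientAddGroup.mk' (Icomp n k a a) (m • oneBasis n a) =
      QuotientAddGroup.mk' (Icomp n k a a) (m' • oneBasis n a)) : m = m' := by
  obtain ⟨z, hz, hz2⟩ := (QuotientAddGroup.mk'_eq_mk' (N := Icomp n k a a)).mp h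
  have hzeq : z = (m' - m) • oneBasis n a := by
    rw [sub_smul]
    exact eq_sub_of_add_eq' hz2
  rw [hzeq] at hz
  have := eq_zero_of_smul_oneBasis_mem_Icomp a ha _ hz
  omega

lemma mem_AcompDeg_self (a : Matching n) (y : Acomp n k a a) :
    y ∈ AcompDeg n k a a 0 ↔
      ∃ m : ℤ, y = QuotientAddGroup.mk' (Icomp n k a a) (m • oneBasis n a) := by
  constructor
  · rintro ⟨x, hx, rfl⟩
    exact ⟨x (labOne n a a), by rw [← FMdeg_self_zero a x hx]⟩
  · rintro ⟨m, rfl⟩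
    exact ⟨m • oneBasis n a, smul_oneBasis_mem a m, rfl⟩

lemma AcompDeg_ne_eq_zero (a b : Matching n) (hab : a.f ≠ b.f) (y : Acomp n k a b)
    (hy : y ∈ AcompDeg n k a b 0) : y = 0 := by
  rcases hy with ⟨x, hx, rfl⟩
  rw [FMdeg_zero_eq_zero a b hab x hx]
  simp

end AuxDeg

section AuxRing

open Finset

variable {n k : ℕ}

abbrev uB (a : BB n k) : Acomp n k a.1 a.1 :=
  QuotientAddGroup.mk' (Icomp n k a.1 a.1) (oneBasis n a.1)

lemma uB_smul (a : BB n k) (m : ℤ) :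
    QuotientAddGroup.mk' (Icomp n k a.1 a.1) (m • oneBasis n a.1) = m • uB a := by
  rw [map_zsmul]

def coeffA (a : BB n k) (y : Acomp n k a.1 a.1) : ℤ :=
  if h : ∃ m : ℤ, y = QuotientAddGroup.mk' (Icomp n k a.1 a.1) (m • oneBasis n a.1)
  then h.choose else 0

lemma coeffA_spec (a : BB n k) (m : ℤ) :
    coeffA a (QuotientAddGroup.mk' (Icomp n k a.1 a.1) (m • oneBasis n a.1)) = m := by
  have h : ∃ m' : ℤ, QuotientAddGroup.mk' (Icomp n k a.1 a.1) (m • oneBasis n a.1) =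
      QuotientAddGroup.mk' (Icomp n k a.1 a.1) (m' • oneBasis n a.1) := ⟨m, rfl⟩
  rw [coeffA, dif_pos h]
  exact (mk_smul_oneBasis_inj a.1 a.2 h.choose_spec).symm

lemma BB_ne_f {a b : BB n k} (h : a ≠ b) : a.1.f ≠ b.1.f := by
  intro h'
  exact h (Subtype.ext (Matching.f_injective h'))

variable (A : ArcAlg n k)

lemma idem_eq (a : BB n k) : A.idem a = A.dec.symm (Pi.single (a, a) (uB a)) := rfl

lemma mem_degPart_iff (x : A.R) :
    x ∈ A.degPart 0 ↔ ∀ p : BB n k × BB n k, A.dec x p ∈ AcompDeg n k p.1.1 p.2.1 0 := by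
  rw [ArcAlg.degPart, AddSubgroup.mem_comap, AddSubgroup.mem_pi]
  constructor
  · intro h p
    exact h p (Set.mem_univ p)
  · intro h p _
    exact h p

lemma idem_mem (a : BB n k) : A.idem a ∈ A.degPart 0 := by
  rw [mem_degPart_iff]
  intro p
  rw [idem_eq, AddEquiv.apply_symm_apply]
  by_cases hp : p = (a, a)
  · subst hp
    rw [Pi.single_eq_same]
    exact (mem_AcompDeg_self a.1 (uB a)).mpr ⟨1, by rw [one_smul]⟩
  · rw [Pi.single_eq_of_ne hp]
    exact (AcompDeg n k p.1.1 p.2.1 0).zero_mem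

lemma idem_mul_idem_ne (a b : BB n k) (h : a ≠ b) : A.idem a * A.idem b = 0 := by
  rw [idem_eq, idem_eq]
  exact A.mul_apart a a b b (uB a) (uB b) h

lemma idem_mul_idem (a : BB n k) : A.idem a * A.idem a = A.idem a := by
  have h1 : A.idem a * (1 : A.R) = A.idem a := mul_one _
  rw [A.one_def, Finset.mul_sum, Finset.sum_eq_single a] at h1
  · exact h1
  · intro b _ hb
    exact idem_mul_idem_ne A a b (Ne.symm hb)
  · intro h
    exact absurd (mem_univ a) h

lemma dec_sum_idem_diag (f : BB n k → ℤ) (c : BB n k) :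
    A.dec (∑ a : BB n k, f a • A.idem a) (c, c) = f c • uB c := by
  rw [map_sum, Finset.sum_apply]
  have he : ∀ a : BB n k,
      (A.dec (f a • A.idem a)) (c, c) =
        f a • (Pi.single (M := fun p : BB n k × BB n k => Acomp n k p.1.1 p.2.1)
          (a, a) (uB a) (c, c)) := by
    intro a
    rw [map_zsmul, idem_eq, AddEquiv.apply_symm_apply]
    rfl
  rw [Finset.sum_congr rfl (fun a _ => he a), Finset.sum_eq_single c]
  · rw [Pi.single_eq_same]
  · intro b _ hb
    rw [Pi.single_eq_of_ne (fun hcb => hb (congrArg Prod.fst hcb).symm), smul_zero]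
  · intro h
    exact absurd (mem_univ c) h

lemma dec_sum_idem_off (f : BB n k → ℤ) (p : BB n k × BB n k) (hp : p.1 ≠ p.2) :
    A.dec (∑ a : BB n k, f a • A.idem a) p = 0 := by
  rw [map_sum, Finset.sum_apply]
  apply Finset.sum_eq_zero
  intro a _
  rw [map_zsmul, idem_eq, AddEquiv.apply_symm_apply]
  have hpa : p ≠ (a, a) := by
    intro h
    rw [h] at hp
    exact hp rfl
  show f a • (Pi.single (M := fun p : BB n k × BB n k => Acomp n k p.1.1 p.2.1)
      (a, a) (uB a)) p = 0
  rw [Pi.single_eq_of_ne hpa, smul_zero]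

lemma sum_idem_mem (f : BB n k → ℤ) : (∑ a : BB n k, f a • A.idem a) ∈ A.degPart 0 :=
  AddSubgroup.sum_mem _ (fun a _ => AddSubgroup.zsmul_mem _ (idem_mem A a) _)

lemma decomp (x : A.R) (hx : x ∈ A.degPart 0) :
    x = ∑ a : BB n k, (coeffA a (A.dec x (a, a))) • A.idem a := by
  apply A.dec.injective
  funext p
  obtain ⟨c, d⟩ := p
  rw [mem_degPart_iff] at hx
  by_cases hcd : c = d
  · subst hcd
    rw [dec_sum_idem_diag]
    obtain ⟨m, hm⟩ := (mem_AcompDeg_self c.1 _).mp (hx (c, c))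
    rw [hm, coeffA_spec]
    exact uB_smul c m
  · rw [dec_sum_idem_off A _ _ hcd]
    exact AcompDeg_ne_eq_zero c.1 d.1 (BB_ne_f hcd) _ (hx (c, d))

lemma coeff_sum_idem (f : BB n k → ℤ) :
    (fun a => coeffA a (A.dec (∑ b : BB n k, f b • A.idem b) (a, a))) = f := by
  funext a
  rw [dec_sum_idem_diag, ← uB_smul, coeffA_spec]

def phi : A.degPart 0 ≃+ (BB n k → ℤ) where
  toFun x := fun a => coeffA a (A.dec x.1 (a, a))
  invFun f := ⟨∑ a : BB n k, f a • A.idem a, sum_idem_mem A f⟩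
  left_inv := by
    rintro ⟨x, hx⟩
    exact Subtype.ext (decomp A x hx).symm
  right_inv := by
    intro f
    exact coeff_sum_idem A f
  map_add' := by
    rintro ⟨x, hx⟩ ⟨y, hy⟩
    funext a
    rw [mem_degPart_iff] at hx hy
    obtain ⟨m, hm⟩ := (mem_AcompDeg_self a.1 _).mp (hx (a, a))
    obtain ⟨m', hm'⟩ := (mem_AcompDeg_self a.1 _).mp (hy (a, a))
    show coeffA a (A.dec (x + y) (a, a)) =
      coeffA a (A.dec x (a, a)) + coeffA a (A.dec y (a, a))
    rw [map_add]
    show coeffA a (A.dec x (a, a) + A.dec y (a, a)) = _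
    rw [hm, hm', coeffA_spec, coeffA_spec, ← map_add, ← add_smul, coeffA_spec]

lemma phi_apply (x : A.degPart 0) :
    phi A x = fun a => coeffA a (A.dec x.1 (a, a)) := rfl

end AuxRing

/-- **Statement 8.** The degree-`0` part of `A^{n-k,k}` is isomorphic, as a ring, to the
product of copies of `ℤ` indexed by `B^{n-k,k}`, with the idempotent `1_a` corresponding
to the indicator function of `a`. -/
theorem deg_zero_part (n k : ℕ) (hk : k ≤ n) (A : ArcAlg n k) :
    ∃ φ : A.degPart 0 ≃+ (BB n k → ℤ),
      (∀ x y : A.degPart 0, ∃ h : (x : A.R) * (y : A.R) ∈ A.degPart 0,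
          φ ⟨(x : A.R) * (y : A.R), h⟩ = φ x * φ y) ∧
      (∃ h1 : (1 : A.R) ∈ A.degPart 0, φ ⟨1, h1⟩ = 1) ∧
      (∀ a : BB n k, ∃ ha : A.idem a ∈ A.degPart 0,
          φ ⟨A.idem a, ha⟩ = fun b => if b = a then 1 else 0) := by
  refine ⟨phi A, ?_, ?_, ?_⟩
  · rintro ⟨x, hx⟩ ⟨y, hy⟩
    have hxy : x * y = ∑ a : BB n k,
        ((coeffA a (A.dec x (a, a))) * (coeffA a (A.dec y (a, a)))) • A.idem a := by
      conv_lhs => rw [decomp A x hx, decomp A y hy]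
      rw [Finset.sum_mul_sum]
      apply Finset.sum_congr rfl
      intro a _
      rw [Finset.sum_eq_single a]
      · rw [smul_mul_assoc, mul_smul_comm, smul_smul, idem_mul_idem A a]
      · intro b _ hb
        rw [smul_mul_assoc, mul_smul_comm, idem_mul_idem_ne A a b (Ne.symm hb),
          smul_zero, smul_zero]
      · intro h
        exact absurd (Finset.mem_univ a) h
    refine ⟨by rw [hxy]; exact sum_idem_mem A _, ?_⟩
    show (fun a => coeffA a (A.dec (x * y) (a, a))) = _
    rw [hxy]
    exact coeff_sum_idem A _
  · have hone : (1 : A.R) = ∑ a : BB n k, ((1 : ℤ)) • A.idem a := by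
      rw [A.one_def]
      exact Finset.sum_congr rfl (fun a _ => (one_smul ℤ (A.idem a)).symm)
    refine ⟨by rw [hone]; exact sum_idem_mem A _, ?_⟩
    show (fun a => coeffA a (A.dec (1 : A.R) (a, a))) = 1
    rw [hone]
    exact coeff_sum_idem A _
  · intro a
    have hidem : A.idem a = ∑ b : BB n k, (if b = a then (1 : ℤ) else 0) • A.idem b := by
      rw [Finset.sum_eq_single a]
      · rw [if_pos rfl, one_smul]
      · intro b _ hb
        rw [if_neg hb, zero_smul]
      · intro h
        exact absurd (Finset.mem_univ a) h
    refine ⟨by rw [hidem]; exact sum_idem_mem A _, ?_⟩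
    show (fun b => coeffA b (A.dec (A.idem a) (b, b))) = fun b => if b = a then 1 else 0
    rw [hidem]
    exact coeff_sum_idem A _
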